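/- Suppose E[κ_X(X,X)] < ∞, E[κ_Y(Y,Y)] < ∞, E[κ_Z(Z,Z)] < ∞, and that for every g ∈ G_X the function z ↦ E[g(X)|Z=z] has a version in G_Z, and for every g ∈ G_Y the function z ↦ E[g(Y)|Z=z] has a version in G_Z. Then Σ_{XY|Z} = E[(κ_X(·,X) − E[κ_X(·,X)|Z]) ⊗ (κ_Y(·,Y) − E[κ_Y(·,Y)|Z])], i.e., the representation of the conditional covariance operator also holds with the uncentered kernel sections in place of the centered ones. -/

import Mathlib

/-!
# Statement 4

Under the moment and conditional-expectation assumptions, the conditional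
covariance operator `Σ_{XY|Z} = Σ_XY − Σ_XZ Σ_ZZ^† Σ_ZY` also admits the
representation with *uncentered* kernel sections:
`Σ_{XY|Z} = E[(κ_X(·,X) − E[κ_X(·,X)|Z]) ⊗ (κ_Y(·,Y) − E[κ_Y(·,Y)|Z])]`.
-/

open MeasureTheory ProbabilityTheory Filter
open scoped RealInnerProductSpace

noncomputable section

/-- The rank-one operator `u ⊗ v : H₂ → H₁`, `w ↦ ⟪v, w⟫ u`. -/
def rankOne {H1 H2 : Type*} [NormedAddCommGroup H1] [InnerProductSpace ℝ H1]
    [NormedAddCommGroup H2] [InnerProductSpace ℝ H2] (u : H1) (v : H2) : H2 →L[ℝ] H1 :=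
  (innerSL ℝ v).smulRight u

variable {Ω : Type*} [MeasurableSpace Ω]

/-- The mean element `μ = E[k(·,X)] ∈ G` (Bochner integral). -/
def meanElem {H G : Type*} [NormedAddCommGroup G] [InnerProductSpace ℝ G] [CompleteSpace G]
    (P : Measure Ω) (k : H → G) (X : Ω → H) : G :=
  ∫ ω, k (X ω) ∂P

/-- The centered kernel section `κ̃(·,x) = κ(·,x) − μ`. -/
def ctrKer {H G : Type*} [NormedAddCommGroup G] [InnerProductSpace ℝ G] [CompleteSpace G]
    (P : Measure Ω) (k : H → G) (X : Ω → H) (x : H) : G :=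
  k x - meanElem P k X

/-- The (cross-)covariance operator `Σ_{XZ} = E[κ̃_X(·,X) ⊗ κ̃_Z(·,Z)] : G₂ → G₁`. -/
def crossCov {H1 G1 H2 G2 : Type*}
    [NormedAddCommGroup G1] [InnerProductSpace ℝ G1] [CompleteSpace G1]
    [NormedAddCommGroup G2] [InnerProductSpace ℝ G2] [CompleteSpace G2]
    (P : Measure Ω) (k1 : H1 → G1) (X : Ω → H1) (k2 : H2 → G2) (Z : Ω → H2) :
    G2 →L[ℝ] G1 :=
  ∫ ω, rankOne (ctrKer P k1 X (X ω)) (ctrKer P k2 Z (Z ω)) ∂P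

/-- The Penrose axioms characterizing the Moore–Penrose inverse `dag` of a
self-adjoint operator `C`. -/
def IsMoorePenroseInv {G : Type*} [NormedAddCommGroup G] [InnerProductSpace ℝ G]
    (C : G →L[ℝ] G) (dag : G →ₗ[ℝ] G) : Prop :=
  (∀ f, C (dag (C f)) = C f) ∧ (∀ f, dag (C (dag f)) = dag f) ∧
    (∀ f g, ⟪C (dag f), g⟫ = ⟪f, C (dag g)⟫) ∧
    (∀ f g, ⟪dag (C f), g⟫ = ⟪f, dag (C g)⟫)

section AuxHelpers

set_option linter.unusedSectionVars false

variable {Ω' : Type*} {m : MeasurableSpace Ω'} [m0 : MeasurableSpace Ω'] {P : Measure Ω'}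
  {G : Type*} [NormedAddCommGroup G] [InnerProductSpace ℝ G] [CompleteSpace G]

lemma integrable_mul_memL2 {f g : Ω' → ℝ}
    (hf : MemLp f 2 P) (hg : MemLp g 2 P) :
    Integrable (fun ω => f ω * g ω) P := by
  have h := L2.integrable_inner (𝕜 := ℝ) (hf.toLp f) (hg.toLp g)
  refine h.congr ?_
  filter_upwards [hf.coeFn_toLp, hg.coeFn_toLp] with ω h1 h2
  rw [h1, h2]
  simp [RCLike.inner_apply, mul_comm]

lemma memL2_condexp [IsFiniteMeasure P] (hm : m ≤ m0) {f : Ω' → G} (hf : MemLp f 2 P) :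
    MemLp (condExp m P f) 2 P := by
  have hfi : Integrable f P := hf.integrable one_le_two
  have h : (((condExpL2 G ℝ hm (hf.toLp f) : lpMeas G ℝ m 2 P) : Lp G 2 P) : Ω' → G)
      =ᵐ[P] condExp m P f := by
    refine ae_eq_condExp_of_forall_setIntegral_eq hm hfi
      (fun s _ _ => (integrable_condExpL2_of_isFiniteMeasure hm).integrableOn)
      (fun s hs hμs => ?_) (aestronglyMeasurable_condExpL2 hm _)
    rw [integral_condExpL2_eq hm (hf.toLp f) hs hμs.ne]
    exact setIntegral_congr_ae (hm s hs) (hf.coeFn_toLp.mono fun ω hω _ => hω)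
  exact (Lp.memLp _).ae_eq h

lemma condexp_inner_comm [IsFiniteMeasure P] (hm : m ≤ m0)
    {f : Ω' → G} (hf : Integrable f P) (c : G) :
    (fun ω => ⟪c, condExp m P f ω⟫) =ᵐ[P] condExp m P (fun ω => ⟪c, f ω⟫) :=
  ae_eq_condExp_of_forall_setIntegral_eq hm (hf.const_inner c)
    (fun s _ _ => (integrable_condExp.const_inner c).integrableOn)
    (fun s hs _ => by
      rw [integral_inner integrable_condExp.integrableOn c,
        setIntegral_condExp hm hf hs, ← integral_inner hf.integrableOn c])
    ((stronglyMeasurable_const.inner stronglyMeasurable_condExp).aestronglyMeasurable)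

lemma integral_mul_condexp [IsFiniteMeasure P] (hm : m ≤ m0) {c b : Ω' → ℝ}
    (hcm : StronglyMeasurable[m] c) (hc : MemLp c 2 P) (hb : MemLp b 2 P) :
    ∫ ω, c ω * b ω ∂P = ∫ ω, c ω * (condExp m P b) ω ∂P := by
  have hcb : Integrable (fun ω => c ω * b ω) P := integrable_mul_memL2 hc hb
  have h := condExp_mul_of_stronglyMeasurable_left (μ := P) hcm hcb (hb.integrable one_le_two)
  calc ∫ ω, c ω * b ω ∂P = ∫ ω, (condExp m P (fun ω => c ω * b ω)) ω ∂P :=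
        (integral_condExp hm).symm
    _ = ∫ ω, c ω * (condExp m P b) ω ∂P := integral_congr_ae h

lemma integral_center_mul [IsProbabilityMeasure P] {f g : Ω' → ℝ}
    (hf : MemLp f 2 P) (hg : MemLp g 2 P) :
    ∫ ω, (f ω - ∫ ω', f ω' ∂P) * (g ω - ∫ ω', g ω' ∂P) ∂P
      = ∫ ω, f ω * g ω ∂P - (∫ ω, f ω ∂P) * ∫ ω, g ω ∂P := by
  have hfi : Integrable f P := hf.integrable one_le_two
  have hgi : Integrable g P := hg.integrable one_le_two
  have hfg : Integrable (fun ω => f ω * g ω) P := integrable_mul_memL2 hf hg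
  set cf := ∫ ω', f ω' ∂P with hcf
  set cg := ∫ ω', g ω' ∂P with hcg
  have h : (fun ω => (f ω - cf) * (g ω - cg))
      = fun ω => f ω * g ω - cg * f ω - (cf * g ω - cf * cg) := by
    funext ω; ring
  have h1 : Integrable (fun ω => f ω * g ω - cg * f ω) P := hfg.sub (hfi.const_mul cg)
  have h2 : Integrable (fun ω => cf * g ω - cf * cg) P :=
    (hgi.const_mul cf).sub (integrable_const _)
  have h3 : Integrable (fun ω => cg * f ω) P := hfi.const_mul cg
  have h4 : Integrable (fun ω => cf * g ω) P := hgi.const_mul cf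
  rw [h, integral_sub h1 h2, integral_sub hfg h3, integral_sub h4 (integrable_const _),
    integral_const_mul, integral_const_mul, integral_const]
  simp only [probReal_univ, measure_univ, ENNReal.toReal_one, one_smul, smul_eq_mul]
  ring

variable {G1 G2 : Type*} [NormedAddCommGroup G1] [InnerProductSpace ℝ G1] [CompleteSpace G1]
  [NormedAddCommGroup G2] [InnerProductSpace ℝ G2] [CompleteSpace G2]

lemma continuous_rankOne : Continuous (fun p : G1 × G2 => rankOne p.1 p.2) := by
  have h : (fun p : G1 × G2 => rankOne p.1 p.2)
      = fun p : G1 × G2 => ContinuousLinearMap.smulRightL ℝ G2 G1 (innerSL ℝ p.2) p.1 := rfl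
  rw [h]
  exact (ContinuousLinearMap.smulRightL ℝ G2 G1).continuous₂.comp
    (((innerSL ℝ).continuous.comp continuous_snd).prodMk continuous_fst)

lemma norm_rankOne (u : G1) (v : G2) : ‖rankOne u v‖ = ‖v‖ * ‖u‖ := by
  rw [rankOne, ContinuousLinearMap.norm_smulRight_apply, innerSL_apply_norm]

lemma rankOne_apply (u : G1) (v : G2) (w : G2) : rankOne u v w = ⟪v, w⟫ • u := rfl

lemma integrable_rankOne {u : Ω' → G1} {w : Ω' → G2}
    (hu : MemLp u 2 P) (hw : MemLp w 2 P) :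
    Integrable (fun ω => rankOne (u ω) (w ω)) P := by
  refine Integrable.mono' (integrable_mul_memL2 hw.norm hu.norm)
    (continuous_rankOne.comp_aestronglyMeasurable (hu.1.prodMk hw.1))
    (Eventually.of_forall fun ω => ?_)
  rw [norm_rankOne]

lemma inner_integral_rankOne {u : Ω' → G1} {w : Ω' → G2}
    (hu : MemLp u 2 P) (hw : MemLp w 2 P) (g : G1) (v : G2) :
    ⟪g, (∫ ω, rankOne (u ω) (w ω) ∂P) v⟫ = ∫ ω, ⟪u ω, g⟫ * ⟪w ω, v⟫ ∂P := by
  have hInt := integrable_rankOne hu hw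
  rw [ContinuousLinearMap.integral_apply hInt]
  have hIntv : Integrable (fun ω => rankOne (u ω) (w ω) v) P :=
    (ContinuousLinearMap.apply ℝ G1 v).integrable_comp hInt
  rw [← integral_inner hIntv g]
  congr 1
  funext ω
  rw [rankOne_apply, real_inner_smul_right, real_inner_comm (u ω) g]
  ring

lemma inner_crossCov [IsProbabilityMeasure P] {H1 H2 : Type*}
    {k1 : H1 → G1} {X : Ω' → H1} {k2 : H2 → G2} {W : Ω' → H2}
    (h1 : MemLp (fun ω => k1 (X ω)) 2 P) (h2 : MemLp (fun ω => k2 (W ω)) 2 P)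
    (g : G1) (v : G2) :
    ⟪g, crossCov P k1 X k2 W v⟫
      = ∫ ω, ⟪k1 (X ω), g⟫ * ⟪k2 (W ω), v⟫ ∂P
        - (∫ ω, ⟪k1 (X ω), g⟫ ∂P) * ∫ ω, ⟪k2 (W ω), v⟫ ∂P := by
  have hu : MemLp (fun ω => ctrKer P k1 X (X ω)) 2 P := h1.sub (memLp_const _)
  have hw : MemLp (fun ω => ctrKer P k2 W (W ω)) 2 P := h2.sub (memLp_const _)
  have hcc : crossCov P k1 X k2 W
      = ∫ ω, rankOne (ctrKer P k1 X (X ω)) (ctrKer P k2 W (W ω)) ∂P := rfl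
  rw [hcc, inner_integral_rankOne hu hw g v]
  have e1 : ∀ ω, ⟪ctrKer P k1 X (X ω), g⟫
      = ⟪k1 (X ω), g⟫ - ∫ ω', ⟪k1 (X ω'), g⟫ ∂P := by
    intro ω
    rw [real_inner_comm]
    show ⟪g, k1 (X ω) - meanElem P k1 X⟫ = _
    rw [inner_sub_right, real_inner_comm g (k1 (X ω))]
    congr 1
    show ⟪g, ∫ ω', k1 (X ω') ∂P⟫ = _
    rw [← integral_inner (h1.integrable one_le_two) g]
    exact integral_congr_ae (Eventually.of_forall fun ω' => real_inner_comm _ _)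
  have e2 : ∀ ω, ⟪ctrKer P k2 W (W ω), v⟫
      = ⟪k2 (W ω), v⟫ - ∫ ω', ⟪k2 (W ω'), v⟫ ∂P := by
    intro ω
    rw [real_inner_comm]
    show ⟪v, k2 (W ω) - meanElem P k2 W⟫ = _
    rw [inner_sub_right, real_inner_comm v (k2 (W ω))]
    congr 1
    show ⟪v, ∫ ω', k2 (W ω') ∂P⟫ = _
    rw [← integral_inner (h2.integrable one_le_two) v]
    exact integral_congr_ae (Eventually.of_forall fun ω' => real_inner_comm _ _)
  simp_rw [e1, e2]
  exact integral_center_mul (h1.inner_const g) (h2.inner_const v)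

end AuxHelpers

theorem statement4
    (P : Measure Ω) [IsProbabilityMeasure P]
    {HX HY HZ GX GY GZ : Type*}
    [NormedAddCommGroup HX] [InnerProductSpace ℝ HX] [CompleteSpace HX]
    [SecondCountableTopology HX] [MeasurableSpace HX] [BorelSpace HX]
    [NormedAddCommGroup HY] [InnerProductSpace ℝ HY] [CompleteSpace HY]
    [SecondCountableTopology HY] [MeasurableSpace HY] [BorelSpace HY]
    [NormedAddCommGroup HZ] [InnerProductSpace ℝ HZ] [CompleteSpace HZ]
    [SecondCountableTopology HZ] [MeasurableSpace HZ] [BorelSpace HZ]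
    [NormedAddCommGroup GX] [InnerProductSpace ℝ GX] [CompleteSpace GX]
    [SecondCountableTopology GX] [MeasurableSpace GX] [BorelSpace GX]
    [NormedAddCommGroup GY] [InnerProductSpace ℝ GY] [CompleteSpace GY]
    [SecondCountableTopology GY] [MeasurableSpace GY] [BorelSpace GY]
    [NormedAddCommGroup GZ] [InnerProductSpace ℝ GZ] [CompleteSpace GZ]
    [SecondCountableTopology GZ] [MeasurableSpace GZ] [BorelSpace GZ]
    (X : Ω → HX) (Y : Ω → HY) (Z : Ω → HZ)
    (hX : Measurable X) (hY : Measurable Y) (hZ : Measurable Z)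
    (kX : HX → GX) (kY : HY → GY) (kZ : HZ → GZ)
    (hkX : Measurable kX) (hkY : Measurable kY) (hkZ : Measurable kZ)
    (hdX : (Submodule.span ℝ (Set.range kX)).topologicalClosure = ⊤)
    (hdY : (Submodule.span ℝ (Set.range kY)).topologicalClosure = ⊤)
    (hdZ : (Submodule.span ℝ (Set.range kZ)).topologicalClosure = ⊤)
    (hmX : Integrable (fun ω => ⟪kX (X ω), kX (X ω)⟫) P)
    (hmY : Integrable (fun ω => ⟪kY (Y ω), kY (Y ω)⟫) P)
    (hmZ : Integrable (fun ω => ⟪kZ (Z ω), kZ (Z ω)⟫) P)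
    (hCEX : ∀ g : GX, ∃ h : GZ,
      (fun ω => ⟪kZ (Z ω), h⟫) =ᵐ[P]
        condExp (MeasurableSpace.comap Z inferInstance) P (fun ω => ⟪kX (X ω), g⟫))
    (hCEY : ∀ g : GY, ∃ h : GZ,
      (fun ω => ⟪kZ (Z ω), h⟫) =ᵐ[P]
        condExp (MeasurableSpace.comap Z inferInstance) P (fun ω => ⟪kY (Y ω), g⟫))
    (dag : GZ →ₗ[ℝ] GZ)
    (hdag : IsMoorePenroseInv (crossCov P kZ Z kZ Z) dag) :
    -- Σ_{XY|Z} = E[(κ_X(·,X) − E[κ_X(·,X)|Z]) ⊗ (κ_Y(·,Y) − E[κ_Y(·,Y)|Z])]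
    ∀ v : GY,
      crossCov P kX X kY Y v - crossCov P kX X kZ Z (dag (crossCov P kZ Z kY Y v))
        = (∫ ω, rankOne
            (kX (X ω) -
              condExp (MeasurableSpace.comap Z inferInstance) P (fun ω' => kX (X ω')) ω)
            (kY (Y ω) -
              condExp (MeasurableSpace.comap Z inferInstance) P (fun ω' => kY (Y ω')) ω)
            ∂P) v := by

  intro v
  have hm : MeasurableSpace.comap Z inferInstance ≤ ‹MeasurableSpace Ω› := hZ.comap_le
  have hX2 : MemLp (fun ω => kX (X ω)) 2 P := by
    have ha : AEStronglyMeasurable (fun ω => kX (X ω)) P :=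
      (hkX.comp hX).aestronglyMeasurable
    rw [memLp_two_iff_integrable_sq_norm ha]
    simpa only [← real_inner_self_eq_norm_sq] using hmX
  have hY2 : MemLp (fun ω => kY (Y ω)) 2 P := by
    have ha : AEStronglyMeasurable (fun ω => kY (Y ω)) P :=
      (hkY.comp hY).aestronglyMeasurable
    rw [memLp_two_iff_integrable_sq_norm ha]
    simpa only [← real_inner_self_eq_norm_sq] using hmY
  have hZ2 : MemLp (fun ω => kZ (Z ω)) 2 P := by
    have ha : AEStronglyMeasurable (fun ω => kZ (Z ω)) P :=
      (hkZ.comp hZ).aestronglyMeasurable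
    rw [memLp_two_iff_integrable_sq_norm ha]
    simpa only [← real_inner_self_eq_norm_sq] using hmZ
  have hXi : Integrable (fun ω => kX (X ω)) P := hX2.integrable one_le_two
  have hYi : Integrable (fun ω => kY (Y ω)) P := hY2.integrable one_le_two
  obtain ⟨e, hes⟩ := hCEY v
  refine ext_inner_left ℝ fun g => ?_
  obtain ⟨d, hds⟩ := hCEX g
  have hA2 : MemLp (fun ω => ⟪kX (X ω), g⟫) 2 P := hX2.inner_const g
  have hB2 : MemLp (fun ω => ⟪kY (Y ω), v⟫) 2 P := hY2.inner_const v
  have hIA2 : MemLp (fun ω => ⟪kZ (Z ω), d⟫) 2 P := hZ2.inner_const d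
  have hIB2 : MemLp (fun ω => ⟪kZ (Z ω), e⟫) 2 P := hZ2.inner_const e
  have hZm : Measurable[MeasurableSpace.comap Z inferInstance] Z :=
    measurable_iff_comap_le.mpr le_rfl
  have hWm : ∀ w : GZ, StronglyMeasurable[MeasurableSpace.comap Z inferInstance] (fun ω => ⟪kZ (Z ω), w⟫) := fun w =>
    (continuous_id.inner continuous_const).comp_stronglyMeasurable
      ((hkZ.comp hZm).stronglyMeasurable)
  have F1 : ∫ ω, ⟪kZ (Z ω), d⟫ ∂P = ∫ ω, ⟪kX (X ω), g⟫ ∂P := by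
    rw [integral_congr_ae hds]; exact integral_condExp hm
  have F2 : ∫ ω, ⟪kZ (Z ω), e⟫ ∂P = ∫ ω, ⟪kY (Y ω), v⟫ ∂P := by
    rw [integral_congr_ae hes]; exact integral_condExp hm
  have FA : ∀ c : Ω → ℝ, StronglyMeasurable[MeasurableSpace.comap Z inferInstance] c → MemLp c 2 P →
      ∫ ω, c ω * ⟪kX (X ω), g⟫ ∂P = ∫ ω, c ω * ⟪kZ (Z ω), d⟫ ∂P := by
    intro c hcm hc2
    rw [integral_mul_condexp hm hcm hc2 hA2]
    refine integral_congr_ae ?_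
    filter_upwards [hds] with ω h
    rw [← h]
  have FB : ∀ c : Ω → ℝ, StronglyMeasurable[MeasurableSpace.comap Z inferInstance] c → MemLp c 2 P →
      ∫ ω, c ω * ⟪kY (Y ω), v⟫ ∂P = ∫ ω, c ω * ⟪kZ (Z ω), e⟫ ∂P := by
    intro c hcm hc2
    rw [integral_mul_condexp hm hcm hc2 hB2]
    refine integral_congr_ae ?_
    filter_upwards [hes] with ω h
    rw [← h]
  have EZY : crossCov P kZ Z kY Y v = crossCov P kZ Z kZ Z e := by
    refine ext_inner_left ℝ fun w => ?_
    have h1 : ∫ ω, ⟪kZ (Z ω), w⟫ * ⟪kY (Y ω), v⟫ ∂P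
        = ∫ ω, ⟪kZ (Z ω), w⟫ * ⟪kZ (Z ω), e⟫ ∂P :=
      FB _ (hWm w) (hZ2.inner_const w)
    rw [inner_crossCov hZ2 hY2 w v, inner_crossCov hZ2 hZ2 w e, h1, ← F2]
  have EZX : crossCov P kZ Z kX X g = crossCov P kZ Z kZ Z d := by
    refine ext_inner_left ℝ fun w => ?_
    have h1 : ∫ ω, ⟪kZ (Z ω), w⟫ * ⟪kX (X ω), g⟫ ∂P
        = ∫ ω, ⟪kZ (Z ω), w⟫ * ⟪kZ (Z ω), d⟫ ∂P :=
      FA _ (hWm w) (hZ2.inner_const w)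
    rw [inner_crossCov hZ2 hX2 w g, inner_crossCov hZ2 hZ2 w d, h1, ← F1]
  have adj : ∀ q : GZ, ⟪g, crossCov P kX X kZ Z q⟫ = ⟪crossCov P kZ Z kX X g, q⟫ := by
    intro q
    rw [inner_crossCov hX2 hZ2 g q, real_inner_comm q (crossCov P kZ Z kX X g),
      inner_crossCov hZ2 hX2 q g,
      show (∫ ω, ⟪kX (X ω), g⟫ * ⟪kZ (Z ω), q⟫ ∂P)
          = ∫ ω, ⟪kZ (Z ω), q⟫ * ⟪kX (X ω), g⟫ ∂P from
        integral_congr_ae (Eventually.of_forall fun ω => mul_comm _ _),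
      mul_comm (∫ ω, ⟪kX (X ω), g⟫ ∂P) _]
  have selfadj : ∀ w u : GZ,
      ⟪crossCov P kZ Z kZ Z w, u⟫ = ⟪w, crossCov P kZ Z kZ Z u⟫ := by
    intro w u
    rw [real_inner_comm u (crossCov P kZ Z kZ Z w), inner_crossCov hZ2 hZ2 u w,
      inner_crossCov hZ2 hZ2 w u,
      show (∫ ω, ⟪kZ (Z ω), u⟫ * ⟪kZ (Z ω), w⟫ ∂P)
          = ∫ ω, ⟪kZ (Z ω), w⟫ * ⟪kZ (Z ω), u⟫ ∂P from
        integral_congr_ae (Eventually.of_forall fun ω => mul_comm _ _),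
      mul_comm (∫ ω, ⟪kZ (Z ω), u⟫ ∂P) _]
  have HA := inner_crossCov hX2 hY2 g v
  have HB : ⟪g, crossCov P kX X kZ Z (dag (crossCov P kZ Z kY Y v))⟫
      = ∫ ω, ⟪kZ (Z ω), d⟫ * ⟪kZ (Z ω), e⟫ ∂P
        - (∫ ω, ⟪kZ (Z ω), d⟫ ∂P) * ∫ ω, ⟪kZ (Z ω), e⟫ ∂P := by
    rw [EZY, adj, EZX, selfadj, hdag.1 e, inner_crossCov hZ2 hZ2 d e]
  have hEX2 : MemLp (condExp (MeasurableSpace.comap Z inferInstance) P fun ω' => kX (X ω')) 2 P := memL2_condexp hm hX2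
  have hEY2 : MemLp (condExp (MeasurableSpace.comap Z inferInstance) P fun ω' => kY (Y ω')) 2 P := memL2_condexp hm hY2
  have hu : MemLp (fun ω => kX (X ω) - condExp (MeasurableSpace.comap Z inferInstance) P (fun ω' => kX (X ω')) ω) 2 P :=
    hX2.sub hEX2
  have hw : MemLp (fun ω => kY (Y ω) - condExp (MeasurableSpace.comap Z inferInstance) P (fun ω' => kY (Y ω')) ω) 2 P :=
    hY2.sub hEY2
  have HC : ⟪g, (∫ ω, rankOne
        (kX (X ω) - condExp (MeasurableSpace.comap Z inferInstance) P (fun ω' => kX (X ω')) ω)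
        (kY (Y ω) - condExp (MeasurableSpace.comap Z inferInstance) P (fun ω' => kY (Y ω')) ω) ∂P) v⟫
      = ∫ ω, ⟪kX (X ω) - condExp (MeasurableSpace.comap Z inferInstance) P (fun ω' => kX (X ω')) ω, g⟫
          * ⟪kY (Y ω) - condExp (MeasurableSpace.comap Z inferInstance) P (fun ω' => kY (Y ω')) ω, v⟫ ∂P :=
    inner_integral_rankOne hu hw g v
  have hgL : (fun ω => ⟪g, condExp (MeasurableSpace.comap Z inferInstance) P (fun ω' => kX (X ω')) ω⟫)
      =ᵐ[P] fun ω => ⟪kZ (Z ω), d⟫ := by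
    refine (condexp_inner_comm hm hXi g).trans ?_
    rw [show (fun ω => ⟪g, kX (X ω)⟫) = fun ω => ⟪kX (X ω), g⟫ from
      funext fun ω => real_inner_comm _ _]
    exact hds.symm
  have hvL : (fun ω => ⟪v, condExp (MeasurableSpace.comap Z inferInstance) P (fun ω' => kY (Y ω')) ω⟫)
      =ᵐ[P] fun ω => ⟪kZ (Z ω), e⟫ := by
    refine (condexp_inner_comm hm hYi v).trans ?_
    rw [show (fun ω => ⟪v, kY (Y ω)⟫) = fun ω => ⟪kY (Y ω), v⟫ from
      funext fun ω => real_inner_comm _ _]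
    exact hes.symm
  have HC2 : ∫ ω, ⟪kX (X ω) - condExp (MeasurableSpace.comap Z inferInstance) P (fun ω' => kX (X ω')) ω, g⟫
        * ⟪kY (Y ω) - condExp (MeasurableSpace.comap Z inferInstance) P (fun ω' => kY (Y ω')) ω, v⟫ ∂P
      = ∫ ω, (⟪kX (X ω), g⟫ - ⟪kZ (Z ω), d⟫) * (⟪kY (Y ω), v⟫ - ⟪kZ (Z ω), e⟫) ∂P := by
    refine integral_congr_ae ?_
    filter_upwards [hgL, hvL] with ω h1 h2
    rw [inner_sub_left, inner_sub_left,
      real_inner_comm g (condExp (MeasurableSpace.comap Z inferInstance) P (fun ω' => kX (X ω')) ω), h1,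
      real_inner_comm v (condExp (MeasurableSpace.comap Z inferInstance) P (fun ω' => kY (Y ω')) ω), h2]
  have HC3 : ∫ ω, (⟪kX (X ω), g⟫ - ⟪kZ (Z ω), d⟫) * (⟪kY (Y ω), v⟫ - ⟪kZ (Z ω), e⟫) ∂P
      = ∫ ω, ⟪kX (X ω), g⟫ * ⟪kY (Y ω), v⟫ ∂P
        - ∫ ω, ⟪kZ (Z ω), d⟫ * ⟪kZ (Z ω), e⟫ ∂P := by
    have iAB : Integrable (fun ω => ⟪kX (X ω), g⟫ * ⟪kY (Y ω), v⟫) P :=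
      integrable_mul_memL2 hA2 hB2
    have iIAB : Integrable (fun ω => ⟪kZ (Z ω), d⟫ * ⟪kY (Y ω), v⟫) P :=
      integrable_mul_memL2 hIA2 hB2
    have iAIB : Integrable (fun ω => ⟪kX (X ω), g⟫ * ⟪kZ (Z ω), e⟫) P :=
      integrable_mul_memL2 hA2 hIB2
    have iII : Integrable (fun ω => ⟪kZ (Z ω), d⟫ * ⟪kZ (Z ω), e⟫) P :=
      integrable_mul_memL2 hIA2 hIB2
    have expand : (fun ω => (⟪kX (X ω), g⟫ - ⟪kZ (Z ω), d⟫)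
          * (⟪kY (Y ω), v⟫ - ⟪kZ (Z ω), e⟫))
        = fun ω => ⟪kX (X ω), g⟫ * ⟪kY (Y ω), v⟫ - ⟪kZ (Z ω), d⟫ * ⟪kY (Y ω), v⟫
            - (⟪kX (X ω), g⟫ * ⟪kZ (Z ω), e⟫ - ⟪kZ (Z ω), d⟫ * ⟪kZ (Z ω), e⟫) := by
      funext ω; ring
    have h3 : ∫ ω, ⟪kZ (Z ω), d⟫ * ⟪kY (Y ω), v⟫ ∂P
        = ∫ ω, ⟪kZ (Z ω), d⟫ * ⟪kZ (Z ω), e⟫ ∂P :=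
      FB _ (hWm d) hIA2
    have h4 : ∫ ω, ⟪kX (X ω), g⟫ * ⟪kZ (Z ω), e⟫ ∂P
        = ∫ ω, ⟪kZ (Z ω), d⟫ * ⟪kZ (Z ω), e⟫ ∂P := by
      rw [show (∫ ω, ⟪kX (X ω), g⟫ * ⟪kZ (Z ω), e⟫ ∂P)
            = ∫ ω, ⟪kZ (Z ω), e⟫ * ⟪kX (X ω), g⟫ ∂P from
          integral_congr_ae (Eventually.of_forall fun ω => mul_comm _ _),
        FA _ (hWm e) hIB2]
      exact integral_congr_ae (Eventually.of_forall fun ω => mul_comm _ _)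
    have hI1 : Integrable (fun ω => ⟪kX (X ω), g⟫ * ⟪kY (Y ω), v⟫
        - ⟪kZ (Z ω), d⟫ * ⟪kY (Y ω), v⟫) P := iAB.sub iIAB
    have hI2 : Integrable (fun ω => ⟪kX (X ω), g⟫ * ⟪kZ (Z ω), e⟫
        - ⟪kZ (Z ω), d⟫ * ⟪kZ (Z ω), e⟫) P := iAIB.sub iII
    rw [expand, integral_sub hI1 hI2, integral_sub iAB iIAB,
      integral_sub iAIB iII, h3, h4]
    ring
  rw [inner_sub_right, HA, HB, HC, HC2, HC3, F1, F2]
  ring
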